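/- The set of rulings {v ∈ L : B(v,v) = 0, B(v,K) = −2, B(v,C) = 0} is finite and has exactly 27 elements. -/

import Mathlib

set_option maxRecDepth 100000
set_option maxHeartbeats 1000000

noncomputable section
namespace ADEPaper

/-- The Picard lattice `L = ℤ^{n+2}` with basis `h = e 0`, `lᵢ = e i` for `1 ≤ i ≤ n+1`. -/
abbrev L (n : ℕ) : Type := Fin (n + 2) → ℤ

/-- The intersection form: `B(h,h) = 1`, `B(lᵢ,lᵢ) = -1`, distinct basis vectors orthogonal. -/
def B (n : ℕ) (v w : L n) : ℤ :=
  v 0 * w 0 - ∑ i : Fin (n + 1), v i.succ * w i.succ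

/-- The canonical class `K = -3h + l₁ + ⋯ + l_{n+1}`. -/
def K (n : ℕ) : L n := fun j => if j = 0 then -3 else 1

/-- `C = l_{n+1}`, the exceptional curve of the `Eₙ`-surface. -/
def C (n : ℕ) : L n := fun j => if j = Fin.last (n + 1) then 1 else 0

namespace E6Aux

def P (v : L 6) : Prop := B 6 v v = 0 ∧ B 6 v (K 6) = -2 ∧ B 6 v (C 6) = 0

instance : DecidablePred P := fun v => by unfold P; infer_instance

def lo : L 6 := fun j => if j = 0 then 1 else if j = 7 then 0 else -2
def hi : L 6 := fun j => if j = 0 then 3 else 0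

lemma card_filter : ((Finset.Icc lo hi).filter P).card = 27 := by decide

lemma coords (v : L 6) (h : P v) :
    v 0 * v 0 = v 1 * v 1 + v 2 * v 2 + v 3 * v 3 + v 4 * v 4 + v 5 * v 5 + v 6 * v 6
    ∧ 3 * v 0 + (v 1 + v 2 + v 3 + v 4 + v 5 + v 6) = 2 ∧ v 7 = 0 := by
  obtain ⟨h1, h2, h3⟩ := h
  have e3 : Fin.succ (2:Fin 7) = (3:Fin 8) := rfl
  have e4 : Fin.succ (3:Fin 7) = (4:Fin 8) := rfl
  have e5 : Fin.succ (4:Fin 7) = (5:Fin 8) := rfl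
  have e6 : Fin.succ (5:Fin 7) = (6:Fin 8) := rfl
  have e7 : Fin.succ (6:Fin 7) = (7:Fin 8) := rfl
  have f3 : ((3:Fin 7):ℕ) = 3 := rfl
  have f4 : ((4:Fin 7):ℕ) = 4 := rfl
  have f5 : ((5:Fin 7):ℕ) = 5 := rfl
  have f6 : ((6:Fin 7):ℕ) = 6 := rfl
  simp [B, K, C, Fin.sum_univ_seven, e3, e4, e5, e6, e7, f3, f4, f5, f6] at h1 h2 h3
  refine ⟨by nlinarith [h3], by linarith, by linarith⟩

lemma key (a b c1 c2 c3 c4 c5 : ℤ)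
    (h1 : a * a = b * b + c1 * c1 + c2 * c2 + c3 * c3 + c4 * c4 + c5 * c5)
    (h2 : 3 * a + (b + c1 + c2 + c3 + c4 + c5) = 2) : -2 ≤ b ∧ b ≤ 0 := by
  have hs : c1 + c2 + c3 + c4 + c5 = 2 - 3*a - b := by linarith
  have hss : (c1 + c2 + c3 + c4 + c5)^2 = (2 - 3*a - b)^2 := by rw [hs]
  have hq : 15 * b^2 + 20 * b - 20 ≤ 0 := by
    nlinarith [hss, sq_nonneg (4*a + 3*b - 6), sq_nonneg (c1 - c2), sq_nonneg (c1 - c3),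
      sq_nonneg (c1 - c4), sq_nonneg (c1 - c5), sq_nonneg (c2 - c3), sq_nonneg (c2 - c4),
      sq_nonneg (c2 - c5), sq_nonneg (c3 - c4), sq_nonneg (c3 - c5), sq_nonneg (c4 - c5)]
  exact ⟨by nlinarith [hq, sq_nonneg (b + 3)], by nlinarith [hq, sq_nonneg (b - 1)]⟩

lemma mem_box (v : L 6) (h : P v) : v ∈ Finset.Icc lo hi := by
  obtain ⟨h1, h2, h7⟩ := coords v h
  have hcs : 3 * v 0 * v 0 - 12 * v 0 + 4 ≤ 0 := by
    nlinarith [sq_nonneg (v 1 - v 2), sq_nonneg (v 1 - v 3), sq_nonneg (v 1 - v 4),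
      sq_nonneg (v 1 - v 5), sq_nonneg (v 1 - v 6), sq_nonneg (v 2 - v 3),
      sq_nonneg (v 2 - v 4), sq_nonneg (v 2 - v 5), sq_nonneg (v 2 - v 6),
      sq_nonneg (v 3 - v 4), sq_nonneg (v 3 - v 5), sq_nonneg (v 3 - v 6),
      sq_nonneg (v 4 - v 5), sq_nonneg (v 4 - v 6), sq_nonneg (v 5 - v 6)]
  have ha1 : 1 ≤ v 0 := by nlinarith [hcs]
  have ha3 : v 0 ≤ 3 := by nlinarith [hcs, sq_nonneg (v 0 - 4)]
  have H1 := key (v 0) (v 1) (v 2) (v 3) (v 4) (v 5) (v 6) (by linarith) (by linarith)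
  have H2 := key (v 0) (v 2) (v 1) (v 3) (v 4) (v 5) (v 6) (by linarith) (by linarith)
  have H3 := key (v 0) (v 3) (v 1) (v 2) (v 4) (v 5) (v 6) (by linarith) (by linarith)
  have H4 := key (v 0) (v 4) (v 1) (v 2) (v 3) (v 5) (v 6) (by linarith) (by linarith)
  have H5 := key (v 0) (v 5) (v 1) (v 2) (v 3) (v 4) (v 6) (by linarith) (by linarith)
  have H6 := key (v 0) (v 6) (v 1) (v 2) (v 3) (v 4) (v 5) (by linarith) (by linarith)
  refine Finset.mem_Icc.mpr ⟨fun j => ?_, fun j => ?_⟩ <;> fin_cases j <;>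
    simp [lo, hi] <;> omega

end E6Aux

/-- The set of rulings on an `E_6`-surface, i.e. classes `v` with `B(v,v) = 0`,
`B(v,K) = -2` and `B(v,C) = 0`, is finite with exactly 27 elements. -/
theorem E6_rulings_card :
    {v : L 6 | B 6 v v = 0 ∧ B 6 v (K 6) = -2 ∧ B 6 v (C 6) = 0}.Finite ∧
    {v : L 6 | B 6 v v = 0 ∧ B 6 v (K 6) = -2 ∧ B 6 v (C 6) = 0}.ncard
      = 27 := by
  have hset : {v : L 6 | B 6 v v = 0 ∧ B 6 v (K 6) = -2 ∧ B 6 v (C 6) = 0}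
      = ↑((Finset.Icc E6Aux.lo E6Aux.hi).filter E6Aux.P) := by
    ext v
    simp only [Set.mem_setOf_eq, Finset.coe_filter, Set.mem_setOf_eq]
    constructor
    · intro hv
      exact ⟨E6Aux.mem_box v hv, hv⟩
    · exact fun h => h.2
  rw [hset]
  exact ⟨Finset.finite_toSet _, by rw [Set.ncard_coe_finset, E6Aux.card_filter]⟩

end ADEPaper
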